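/- Let T be a finite b-ary tree and G a graph on the leaves of T. Suppose for some fixed k: (i) every set of b siblings in T is either strongly linked or weakly linked by G; (ii) for any two sets of siblings which are k-cousins, at least one is strongly linked; (iii) every set of siblings within the top k layers of T is strongly linked. Then G is connected. -/

import Mathlib

/- We model a finite `b`-ary tree as a prefix-closed set `S` of lists over `Fin b`
(the root is the empty list, children of `v` are `v ++ [i]`), in which every internal
vertex has all `b` children. Ancestors are prefixes. -/

/-- `v` is a leaf of the tree `S`. -/
def IsLeaf {b : ℕ} (S : Set (List (Fin b))) (v : List (Fin b)) : Prop :=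
  v ∈ S ∧ ∀ i : Fin b, v ++ [i] ∉ S

/-- `x` and `y` are linked by `G`: some leaf-descendant of `x` is adjacent in `G`
to some leaf-descendant of `y`. -/
def Linked {b : ℕ} (S : Set (List (Fin b))) (G : SimpleGraph {v : List (Fin b) // IsLeaf S v})
    (x y : List (Fin b)) : Prop :=
  ∃ x' y' : {v : List (Fin b) // IsLeaf S v}, x <+: x'.1 ∧ y <+: y'.1 ∧ G.Adj x' y'

/-- The auxiliary graph `H_X` on the set `X = {p ++ [i] : i}` of children of `p`,
with edges between linked pairs. -/
def SibGraph {b : ℕ} (S : Set (List (Fin b)))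
    (G : SimpleGraph {v : List (Fin b) // IsLeaf S v}) (p : List (Fin b)) :
    SimpleGraph (Fin b) :=
  SimpleGraph.fromRel (fun i j => Linked S G (p ++ [i]) (p ++ [j]))

/-- The set of siblings `{p ++ [i] : i}` is strongly linked: `H_X` is connected. -/
def StronglyLinked {b : ℕ} (S : Set (List (Fin b)))
    (G : SimpleGraph {v : List (Fin b) // IsLeaf S v}) (p : List (Fin b)) : Prop :=
  (SibGraph S G p).Connected

/-- `z` is a `k`-uncle of `w`: some sibling of `z` is an ancestor of `w` at distance `≤ k`. -/
def KUncle {b : ℕ} (k : ℕ) (z w : List (Fin b)) : Prop :=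
  ∃ (p : List (Fin b)) (i j : Fin b), i ≠ j ∧ z = p ++ [i] ∧ (p ++ [j]) <+: w ∧
    w.length ≤ (p ++ [j]).length + k

/-- `v` and `w` are `k`-cousins: some ancestor `w'` of `w` at distance `≤ k` is a
`k`-uncle of `v`. -/
def KCousins {b : ℕ} (k : ℕ) (v w : List (Fin b)) : Prop :=
  ∃ w' : List (Fin b), w' <+: w ∧ w.length ≤ w'.length + k ∧ KUncle k w' v

/-- The set of siblings `{p ++ [i] : i}` is weakly linked: `H_X` has exactly two
components, and there are `x_i`, `x_j` in different components and a common `k`-uncle `z`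
linked to both. -/
def WeaklyLinked {b : ℕ} (S : Set (List (Fin b)))
    (G : SimpleGraph {v : List (Fin b) // IsLeaf S v}) (k : ℕ) (p : List (Fin b)) : Prop :=
  ∃ i j : Fin b, ¬ (SibGraph S G p).Reachable i j ∧
    (∀ m, (SibGraph S G p).Reachable m i ∨ (SibGraph S G p).Reachable m j) ∧
    ∃ z ∈ S, KUncle k z (p ++ [i]) ∧ KUncle k z (p ++ [j]) ∧
      Linked S G z (p ++ [i]) ∧ Linked S G z (p ++ [j])

namespace Stmt17Aux

variable {b : ℕ} (S : Set (List (Fin b))) (G : SimpleGraph {v : List (Fin b) // IsLeaf S v})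

/-- All leaves below `v` lie in a single component of `G`. -/
def Unsplit (v : List (Fin b)) : Prop :=
  ∀ x y : {u : List (Fin b) // IsLeaf S u}, v <+: x.1 → v <+: y.1 → G.Reachable x y

lemma bdd (hfin : S.Finite) : ∃ N, ∀ v ∈ S, v.length ≤ N := by
  obtain ⟨N, hN⟩ := (hfin.image List.length).bddAbove
  exact ⟨N, fun v hv => hN (Set.mem_image_of_mem _ hv)⟩

lemma exists_leaf (hfin : S.Finite) :
    ∀ v ∈ S, ∃ x : {u : List (Fin b) // IsLeaf S u}, v <+: x.1 := by
  obtain ⟨N, hN⟩ := bdd S hfin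
  suffices H : ∀ n, ∀ v ∈ S, N + 1 - v.length ≤ n →
      ∃ x : {u : List (Fin b) // IsLeaf S u}, v <+: x.1 by
    intro v hv; exact H (N + 1) v hv (by omega)
  intro n
  induction n with
  | zero => intro v hv h; have := hN v hv; omega
  | succ n ih =>
    intro v hv h
    by_cases hl : ∀ i : Fin b, v ++ [i] ∉ S
    · exact ⟨⟨v, hv, hl⟩, List.prefix_refl v⟩
    · push_neg at hl
      obtain ⟨i, hi⟩ := hl
      have hlen : (v ++ [i]).length = v.length + 1 := by simp
      obtain ⟨x, hx⟩ := ih (v ++ [i]) hi (by have := hN _ hi; omega)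
      exact ⟨x, (List.prefix_append v [i]).trans hx⟩

lemma leaf_prefix_eq (hclosed : ∀ v ∈ S, ∀ u : List (Fin b), u <+: v → u ∈ S)
    {l : List (Fin b)} (hl : IsLeaf S l) (x : {u : List (Fin b) // IsLeaf S u})
    (hx : l <+: x.1) : x.1 = l := by
  obtain ⟨t, ht⟩ := hx
  cases t with
  | nil => simpa using ht.symm
  | cons i t' =>
    exfalso
    apply hl.2 i
    apply hclosed x.1 x.2.1
    exact ⟨t', by simpa using ht⟩

lemma unsplit_leaf (hclosed : ∀ v ∈ S, ∀ u : List (Fin b), u <+: v → u ∈ S)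
    {l : List (Fin b)} (hl : IsLeaf S l) : Unsplit S G l := by
  intro x y hx hy
  have : x = y := Subtype.ext ((leaf_prefix_eq S hclosed hl x hx).trans
    (leaf_prefix_eq S hclosed hl y hy).symm)
  rw [this]

lemma child_prefix {p : List (Fin b)} (hp : ∃ i : Fin b, p ++ [i] ∈ S)
    (x : {u : List (Fin b) // IsLeaf S u}) (hx : p <+: x.1) :
    ∃ i : Fin b, (p ++ [i]) <+: x.1 := by
  obtain ⟨t, ht⟩ := hx
  cases t with
  | nil =>
    exfalso
    obtain ⟨i, hi⟩ := hp
    have hxp : x.1 = p := by simpa using ht.symm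
    exact x.2.2 i (by rw [hxp]; exact hi)
  | cons i t' => exact ⟨i, t', by simpa using ht⟩

lemma reach_trans (p : List (Fin b)) (hch : ∀ i : Fin b, Unsplit S G (p ++ [i]))
    {i j : Fin b} (h : (SibGraph S G p).Reachable i j) :
    ∀ x y : {u : List (Fin b) // IsLeaf S u},
      (p ++ [i]) <+: x.1 → (p ++ [j]) <+: y.1 → G.Reachable x y := by
  obtain ⟨w⟩ := h
  induction w with
  | nil => exact fun x y hx hy => hch _ x y hx hy
  | @cons i m j h w ih =>
    intro x y hx hy
    rw [SibGraph, SimpleGraph.fromRel_adj] at h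
    rcases h.2 with hL | hL
    · obtain ⟨x', y', hx', hy', hadj⟩ := hL
      exact ((hch i x x' hx hx').trans hadj.reachable).trans (ih y' y hy' hy)
    · obtain ⟨x', y', hx', hy', hadj⟩ := hL
      exact ((hch i x y' hx hy').trans hadj.reachable.symm).trans (ih x' y hx' hy)

lemma strong_unsplit {p : List (Fin b)} (hp : ∃ i : Fin b, p ++ [i] ∈ S)
    (hch : ∀ i : Fin b, Unsplit S G (p ++ [i]))
    (hs : StronglyLinked S G p) : Unsplit S G p := by
  intro x y hx hy
  obtain ⟨i, hxi⟩ := child_prefix S hp x hx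
  obtain ⟨j, hyj⟩ := child_prefix S hp y hy
  exact reach_trans S G p hch (hs.preconnected i j) x y hxi hyj

lemma not_leaf_of_bad (hclosed : ∀ v ∈ S, ∀ u : List (Fin b), u <+: v → u ∈ S)
    {w : List (Fin b)} (hw : w ∈ S) (hbad : ¬ Unsplit S G w) :
    ∃ i : Fin b, w ++ [i] ∈ S := by
  by_contra h
  push_neg at h
  exact hbad (unsplit_leaf S G hclosed ⟨hw, h⟩)

lemma find_weak (hfin : S.Finite)
    (hclosed : ∀ v ∈ S, ∀ u : List (Fin b), u <+: v → u ∈ S)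
    (hfull : ∀ v ∈ S, ∀ i j : Fin b, v ++ [i] ∈ S → v ++ [j] ∈ S) :
    ∀ w ∈ S, ¬ Unsplit S G w →
      ∃ w', w' ∈ S ∧ ¬ Unsplit S G w' ∧ ¬ StronglyLinked S G w' ∧ w <+: w' := by
  obtain ⟨N, hN⟩ := bdd S hfin
  suffices H : ∀ n, ∀ w ∈ S, N + 1 - w.length ≤ n → ¬ Unsplit S G w →
      ∃ w', w' ∈ S ∧ ¬ Unsplit S G w' ∧ ¬ StronglyLinked S G w' ∧ w <+: w' by
    intro w hw hbad; exact H (N + 1) w hw (by omega) hbad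
  intro n
  induction n with
  | zero => intro w hw h _; have := hN w hw; omega
  | succ n ih =>
    intro w hw h hbad
    by_cases hsw : StronglyLinked S G w
    · obtain ⟨i₀, hi₀⟩ := not_leaf_of_bad S G hclosed hw hbad
      have hchS : ∀ i : Fin b, w ++ [i] ∈ S := fun i => hfull w hw i₀ i hi₀
      have hm : ∃ m : Fin b, ¬ Unsplit S G (w ++ [m]) := by
        by_contra hall
        push_neg at hall
        exact hbad (strong_unsplit S G ⟨i₀, hi₀⟩ hall hsw)
      obtain ⟨m, hm⟩ := hm
      have hlen : (w ++ [m]).length = w.length + 1 := by simp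
      obtain ⟨w', h1, h2, h3, h4⟩ := ih (w ++ [m]) (hchS m)
        (by have := hN _ (hchS m); omega) hm
      exact ⟨w', h1, h2, h3, (List.prefix_append w [m]).trans h4⟩
    · exact ⟨w, hw, hbad, hsw, List.prefix_refl w⟩

end Stmt17Aux

open Stmt17Aux

/-- if (i) every set of siblings is strongly or weakly linked by `G`,
(ii) of any two sets of siblings which are `k`-cousins at least one is strongly linked,
and (iii) every set of siblings within the top `k` layers is strongly linked,
then `G` (a graph on the leaves of the finite `b`-ary tree `S`) is connected. -/
theorem stmt17 (b k : ℕ) (hb : 2 ≤ b)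
    (S : Set (List (Fin b))) (hfin : S.Finite)
    (hroot : ([] : List (Fin b)) ∈ S)
    (hclosed : ∀ v ∈ S, ∀ u : List (Fin b), u <+: v → u ∈ S)
    (hfull : ∀ v ∈ S, ∀ i j : Fin b, v ++ [i] ∈ S → v ++ [j] ∈ S)
    (G : SimpleGraph {v : List (Fin b) // IsLeaf S v})
    (h1 : ∀ p ∈ S, (∃ i : Fin b, p ++ [i] ∈ S) →
      StronglyLinked S G p ∨ WeaklyLinked S G k p)
    (h2 : ∀ p ∈ S, ∀ q ∈ S, p ≠ q →
      (∃ i : Fin b, p ++ [i] ∈ S) → (∃ i : Fin b, q ++ [i] ∈ S) →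
      (∃ i j : Fin b, KCousins k (p ++ [i]) (q ++ [j])) →
      StronglyLinked S G p ∨ StronglyLinked S G q)
    (h3 : ∀ p ∈ S, (∃ i : Fin b, p ++ [i] ∈ S) → p.length + 1 ≤ k →
      StronglyLinked S G p) :
    G.Connected := by
  classical
  by_contra hG
  obtain ⟨x₀, -⟩ := exists_leaf S hfin [] hroot
  rw [SimpleGraph.connected_iff] at hG
  push_neg at hG
  obtain ⟨x, y, hxy⟩ : ∃ x y : {v : List (Fin b) // IsLeaf S v}, ¬ G.Reachable x y := by
    have hpre : ¬ ∀ u v : {v : List (Fin b) // IsLeaf S v}, G.Reachable u v :=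
      fun h => (hG h).false x₀
    push_neg at hpre
    exact hpre
  -- the set of "split" (bad) vertices
  set Bad : Set (List (Fin b)) := {v | v ∈ S ∧ ¬ Unsplit S G v} with hBadDef
  have hBadfin : Bad.Finite := hfin.subset fun v hv => hv.1
  have hrootBad : [] ∈ Bad :=
    ⟨hroot, fun h => hxy (h x y List.nil_prefix List.nil_prefix)⟩
  obtain ⟨p, hpBad, hpmax⟩ := Set.Finite.exists_maximalFor List.length Bad hBadfin ⟨[], hrootBad⟩
  have hmax : ∀ v ∈ Bad, v.length ≤ p.length := by
    intro v hv
    by_contra hlt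
    push_neg at hlt
    have := hpmax (j := v) hv (le_of_lt hlt)
    omega
  obtain ⟨hpS, hpbad⟩ := hpBad
  obtain ⟨i₀, hi₀⟩ := not_leaf_of_bad S G hclosed hpS hpbad
  have hchS : ∀ i : Fin b, p ++ [i] ∈ S := fun i => hfull p hpS i₀ i hi₀
  have hch : ∀ i : Fin b, Unsplit S G (p ++ [i]) := by
    intro i
    by_contra hbad
    have hlen : (p ++ [i]).length = p.length + 1 := by simp
    have := hmax (p ++ [i]) ⟨hchS i, hbad⟩
    omega
  rcases h1 p hpS ⟨i₀, hi₀⟩ with hs | hw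
  · exact hpbad (strong_unsplit S G ⟨i₀, hi₀⟩ hch hs)
  obtain ⟨i, j, hnr, htot, z, hzS, hui, huj, hLi, hLj⟩ := hw
  obtain ⟨q, a, c, hac, hzq, hqc, hqlen⟩ := hui
  have hqlen' : p.length + 1 ≤ q.length + 1 + k := by simpa using hqlen
  have hqc_len : q.length + 1 ≤ p.length + 1 := by
    have := hqc.length_le; simpa using this
  by_cases hql : q.length = p.length
  · -- z is a sibling of p ++ [i]: direct contradiction
    have heq : q ++ [c] = p ++ [i] := hqc.eq_of_length (by simp [hql])
    obtain ⟨hq_eq, hc_eq⟩ := List.append_inj' heq (by simp)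
    have hci : c = i := by simpa using hc_eq
    have hai : a ≠ i := by rw [← hci]; exact hac
    have hzq' : z = p ++ [a] := by rw [hzq, hq_eq]
    have hadj_i : (SibGraph S G p).Adj a i := by
      rw [SibGraph, SimpleGraph.fromRel_adj]
      refine ⟨hai, Or.inl ?_⟩
      rw [← hzq']
      exact hLi
    by_cases haj : a = j
    · subst haj
      exact hnr hadj_i.reachable.symm
    · have hadj_j : (SibGraph S G p).Adj a j := by
        rw [SibGraph, SimpleGraph.fromRel_adj]
        refine ⟨haj, Or.inl ?_⟩
        rw [← hzq']
        exact hLj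
      exact hnr (hadj_i.reachable.symm.trans hadj_j.reachable)
  · -- z lies outside the subtree of p
    have hqcp : (q ++ [c]) <+: p :=
      List.prefix_of_prefix_length_le hqc (List.prefix_append p [i]) (by simp; omega)
    obtain ⟨u, x1, hzu, hx1, hadj1⟩ := hLi
    obtain ⟨u', y1, hzu', hy1, hadj2⟩ := hLj
    have hzbad : ¬ Unsplit S G z := by
      intro hzun
      have hxy1 : G.Reachable x1 y1 :=
        (hadj1.reachable.symm.trans (hzun u u' hzu hzu')).trans hadj2.reachable
      apply hpbad
      intro s t hs ht
      have key : ∀ (r : {u : List (Fin b) // IsLeaf S u}), p <+: r.1 → G.Reachable r x1 := by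
        intro r hr
        obtain ⟨m, hm⟩ := child_prefix S ⟨i₀, hi₀⟩ r hr
        rcases htot m with hreach | hreach
        · exact reach_trans S G p hch hreach r x1 hm hx1
        · exact (reach_trans S G p hch hreach r y1 hm hy1).trans hxy1.symm
      exact (key s hs).trans (key t ht).symm
    obtain ⟨w, hwS, hwbad, hwns, hzw⟩ := find_weak S G hfin hclosed hfull z hzS hzbad
    have hwlen : w.length ≤ p.length := hmax w ⟨hwS, hwbad⟩
    have hpns : ¬ StronglyLinked S G p := fun h => hnr (h.preconnected i j)
    have hpw : p ≠ w := by
      intro hpw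
      have hzp : z <+: p := hpw ▸ hzw
      have hz_eq : z = q ++ [c] :=
        (List.prefix_of_prefix_length_le hzp hqcp (by simp [hzq])).eq_of_length
          (by simp [hzq])
      rw [hzq] at hz_eq
      exact hac (by simpa using hz_eq)
    have hwint : ∃ m : Fin b, w ++ [m] ∈ S := not_leaf_of_bad S G hclosed hwS hwbad
    have hzlen : z.length = q.length + 1 := by simp [hzq]
    have hcous : KCousins k (p ++ [i]) (w ++ [(⟨0, by omega⟩ : Fin b)]) := by
      refine ⟨z, hzw.trans (List.prefix_append w _), ?_, q, a, c, hac, hzq, hqc, hqlen⟩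
      simp only [List.length_append, List.length_singleton]
      omega
    rcases h2 p hpS w hwS hpw ⟨i₀, hi₀⟩ hwint ⟨i, ⟨0, by omega⟩, hcous⟩ with h | h
    · exact hpns h
    · exact hwns h
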